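/- Let $S \in \mathcal{F}_{k,r}$ and $T \in \mathcal{F}_{k,r}$ with $S \setminus T = \{e_1,\dots,e_p\}$, $T \setminus S = \{f_1,\dots,f_p\}$, and $\mathrm{head}(e_i) = \mathrm{head}(f_i)$ for all $i$. For each $i$, let $X_i$ be the minimal tight set with respect to $S$ containing $f_i$ (or $V$ if none exists). Then for every $i \in [p]$ there exists $j \in [p]$ such that $X_i$ contains the arc $e_j$ (both endpoints of $e_j$ lie in $X_i$). -/

import Mathlib

open Finset

variable {V A : Type*}

/-- Number of arcs of `F` entering the vertex set `X`. -/
def inDeg [DecidableEq V] (hd tl : A → V) (F : Finset A) (X : Finset V) : ℕ :=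
  (F.filter (fun a => hd a ∈ X ∧ tl a ∉ X)).card

/-- Number of arcs of `F` with head `v`. -/
def vDeg [DecidableEq V] (hd : A → V) (F : Finset A) (v : V) : ℕ :=
  (F.filter (fun a => hd a = v)).card

/-- The vertex set `X` contains the arc `a` (both endpoints in `X`). -/
def ArcIn (hd tl : A → V) (X : Finset V) (a : A) : Prop :=
  hd a ∈ X ∧ tl a ∈ X

/-- `F` contains a directed cycle. -/
def HasDicycle (hd tl : A → V) (F : Finset A) : Prop :=
  ∃ n : ℕ, 0 < n ∧ ∃ (v : Fin (n + 1) → V) (e : Fin n → A),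
    (∀ i : Fin n, e i ∈ F ∧ tl (e i) = v i.castSucc ∧ hd (e i) = v i.succ) ∧
    v 0 = v (Fin.last n)

/-- `F` is an `r`-arborescence: acyclic, every non-root vertex has exactly one
incoming arc, and `r` has none. -/
def IsArb [DecidableEq V] (hd tl : A → V) (r : V) (F : Finset A) : Prop :=
  ¬ HasDicycle hd tl F ∧ (∀ v : V, v ≠ r → inDeg hd tl F {v} = 1) ∧
    inDeg hd tl F {r} = 0

/-- `F` can be partitioned into `k` arc-disjoint `r`-arborescences. -/
def Feasible [DecidableEq V] [DecidableEq A] (hd tl : A → V) (k : ℕ) (r : V)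
    (F : Finset A) : Prop :=
  ∃ P : Fin k → Finset A, (∀ i j : Fin k, i ≠ j → Disjoint (P i) (P j)) ∧
    Finset.univ.biUnion P = F ∧ ∀ i : Fin k, IsArb hd tl r (P i)

/-- `F` can be partitioned into `k` arc-disjoint arborescences with arbitrary roots. -/
def FeasibleAny [DecidableEq V] [DecidableEq A] (hd tl : A → V) (k : ℕ)
    (F : Finset A) : Prop :=
  ∃ P : Fin k → Finset A, (∀ i j : Fin k, i ≠ j → Disjoint (P i) (P j)) ∧
    Finset.univ.biUnion P = F ∧ ∀ i : Fin k, ∃ r : V, IsArb hd tl r (P i)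

/-- `X` is a tight set with respect to `S`: it avoids the root and exactly `k`
arcs of `S` enter it. -/
def Tight [DecidableEq V] (hd tl : A → V) (S : Finset A) (k : ℕ) (r : V)
    (X : Finset V) : Prop :=
  r ∉ X ∧ inDeg hd tl S X = k

/-- `X` is the inclusionwise minimal tight set with respect to `S` containing the
arc `f`, or `X = V` if no tight set contains `f`. -/
def MinTightFor [Fintype V] [DecidableEq V] (hd tl : A → V) (S : Finset A)
    (k : ℕ) (r : V) (f : A) (X : Finset V) : Prop :=
  (Tight hd tl S k r X ∧ ArcIn hd tl X f ∧
    ∀ Y : Finset V, Tight hd tl S k r Y → ArcIn hd tl Y f → X ⊆ Y) ∨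
  ((¬ ∃ Y : Finset V, Tight hd tl S k r Y ∧ ArcIn hd tl Y f) ∧ X = Finset.univ)

/-- A directed cycle of length `m` in the auxiliary digraph `H` on `[p]`, whose
arcs are the pairs `(i, j)` such that `X i` contains `e j`. -/
def AuxCycle {p : ℕ} (hd tl : A → V) (X : Fin p → Finset V) (e : Fin p → A)
    (m : ℕ) : Prop :=
  ∃ c : Fin m → Fin p, Function.Injective c ∧
    ∀ i : Fin m, ArcIn hd tl (X (c i)) (e (c ⟨(i.val + 1) % m, Nat.mod_lt _ i.pos⟩))

/-- `seq` is a reconfiguration sequence of length `ℓ` from `S` to `T` within the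
family described by `Feas`. -/
def IsReconfig [DecidableEq A] (Feas : Finset A → Prop) (S T : Finset A) (ℓ : ℕ)
    (seq : Fin (ℓ + 1) → Finset A) : Prop :=
  seq 0 = S ∧ seq (Fin.last ℓ) = T ∧ (∀ i, Feas (seq i)) ∧
    ∀ i : Fin ℓ, (seq i.castSucc \ seq i.succ).card = 1 ∧
      (seq i.succ \ seq i.castSucc).card = 1

section MyAux

variable [DecidableEq V] [DecidableEq A]

lemma my_no_selfloop (hd tl : A → V) (r : V) (P : Finset A)
    (hP : IsArb hd tl r P) {a : A} (ha : a ∈ P) : hd a ≠ tl a := by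
  intro h
  exact hP.1 ⟨1, one_pos, fun _ => hd a, fun _ => a,
    fun i => ⟨ha, h.symm, rfl⟩, rfl⟩

lemma my_arb_enters [Fintype V] (hd tl : A → V) (r : V) (P : Finset A)
    (hP : IsArb hd tl r P) (X : Finset V) (hne : X.Nonempty) (hr : r ∉ X) :
    ∃ a ∈ P, hd a ∈ X ∧ tl a ∉ X := by
  by_contra hcon
  push_neg at hcon
  have key : ∀ v, v ∈ X → ∃ a, a ∈ P ∧ hd a = v ∧ tl a ∈ X ∧ tl a ≠ v := by
    intro v hv
    have hvr : v ≠ r := fun h => hr (h ▸ hv)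
    have h1 := hP.2.1 v hvr
    rw [inDeg, Finset.card_eq_one] at h1
    obtain ⟨a, ha⟩ := h1
    have haa : a ∈ P.filter (fun a => hd a ∈ ({v} : Finset V) ∧ tl a ∉ ({v} : Finset V)) :=
      ha ▸ Finset.mem_singleton_self a
    rw [Finset.mem_filter] at haa
    simp only [Finset.mem_singleton] at haa
    obtain ⟨haP, hhd, htl⟩ := haa
    exact ⟨a, haP, hhd, hcon a haP (by rw [hhd]; exact hv), htl⟩
  obtain ⟨v0, hv0⟩ := hne
  have key' : ∀ v : V, ∃ a : A, v ∈ X → (a ∈ P ∧ hd a = v ∧ tl a ∈ X ∧ tl a ≠ v) := by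
    intro v
    by_cases hv : v ∈ X
    · obtain ⟨a, ha⟩ := key v hv
      exact ⟨a, fun _ => ha⟩
    · obtain ⟨a, _⟩ := key v0 hv0
      exact ⟨a, fun h => absurd h hv⟩
  choose g hg using key'
  have hgP : ∀ v, v ∈ X → g v ∈ P := fun v hv => (hg v hv).1
  have hghd : ∀ v, v ∈ X → hd (g v) = v := fun v hv => (hg v hv).2.1
  have hgX : ∀ v, v ∈ X → tl (g v) ∈ X := fun v hv => (hg v hv).2.2.1
  set step : V → V := fun v => tl (g v) with hstep
  have hiter : ∀ n, step^[n] v0 ∈ X := by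
    intro n
    induction n with
    | zero => simpa
    | succ n ih =>
      rw [Function.iterate_succ_apply']
      exact hgX _ ih
  have hninj : ¬ Function.Injective
      (fun n : Fin (Fintype.card V + 1) => step^[n.val] v0) := by
    intro h
    have := Fintype.card_le_of_injective _ h
    simp at this
  rw [Function.not_injective_iff] at hninj
  obtain ⟨n1, n2, heq, hne12⟩ := hninj
  -- wlog n1 < n2
  obtain ⟨a1, a2, hlt, heq'⟩ : ∃ a1 a2 : ℕ, a1 < a2 ∧ step^[a1] v0 = step^[a2] v0 := by
    rcases lt_or_gt_of_ne (fun h => hne12 (Fin.ext h) : (n1:ℕ) ≠ (n2:ℕ)) with h | h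
    · exact ⟨n1, n2, h, heq⟩
    · exact ⟨n2, n1, h, heq.symm⟩
  set m := a2 - a1 with hm
  have hmpos : 0 < m := by omega
  set w := step^[a1] v0 with hw
  have hwfix : step^[m] w = w := by
    rw [hw, ← Function.iterate_add_apply]
    have : m + a1 = a2 := by omega
    rw [this, ← heq']
  have hwX : ∀ n, step^[n] w ∈ X := by
    intro n
    rw [hw, ← Function.iterate_add_apply]
    exact hiter _
  apply hP.1
  refine ⟨m, hmpos, fun i => step^[m - i.val] w,
    fun i => g (step^[m - (i.val + 1)] w), fun i => ?_, ?_⟩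
  · have hiX : step^[m - (i.val + 1)] w ∈ X := hwX _
    refine ⟨hgP _ hiX, ?_, ?_⟩
    · show step (step^[m - (i.val + 1)] w) = step^[m - (i.castSucc).val] w
      rw [← Function.iterate_succ_apply' step (m - (i.val + 1)) w]
      congr 1
      have := i.isLt
      simp only [Fin.coe_castSucc]
      omega
    · rw [hghd _ hiX]
      rfl
  · show step^[m - (0 : Fin (m+1)).val] w = step^[m - (Fin.last m).val] w
    simp [Fin.last, hwfix]

lemma my_inDeg_biUnion [Fintype V] (hd tl : A → V) (n : ℕ) (P : Fin n → Finset A)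
    (hdisj : ∀ i j : Fin n, i ≠ j → Disjoint (P i) (P j)) (X : Finset V) :
    inDeg hd tl (Finset.univ.biUnion P) X = ∑ i : Fin n, inDeg hd tl (P i) X := by
  rw [inDeg, Finset.filter_biUnion, Finset.card_biUnion]
  · rfl
  · intro i _ j _ hij
    exact (hdisj i j hij).mono (Finset.filter_subset _ _) (Finset.filter_subset _ _)

lemma my_feasible_inDeg_ge [Fintype V] (hd tl : A → V) (k : ℕ) (r : V)
    (F : Finset A) (hF : Feasible hd tl k r F) (X : Finset V)
    (hne : X.Nonempty) (hr : r ∉ X) : k ≤ inDeg hd tl F X := by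
  obtain ⟨P, hdisj, hU, harb⟩ := hF
  rw [← hU, my_inDeg_biUnion hd tl k P hdisj]
  calc k = ∑ _i : Fin k, 1 := by simp
    _ ≤ ∑ i : Fin k, inDeg hd tl (P i) X := by
        apply Finset.sum_le_sum
        intro i _
        obtain ⟨a, haP, hhd, htl⟩ := my_arb_enters hd tl r (P i) (harb i) X hne hr
        rw [inDeg, Nat.succ_le_iff, Finset.card_pos]
        exact ⟨a, Finset.mem_filter.mpr ⟨haP, hhd, htl⟩⟩

lemma my_feasible_vDeg (hd tl : A → V) (k : ℕ) (r : V)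
    (F : Finset A) (hF : Feasible hd tl k r F) (v : V) :
    vDeg hd F v = if v = r then 0 else k := by
  obtain ⟨P, hdisj, hU, harb⟩ := hF
  have heach : ∀ i : Fin k, vDeg hd (P i) v = inDeg hd tl (P i) ({v} : Finset V) := by
    intro i
    rw [vDeg, inDeg]
    congr 1
    apply Finset.filter_congr
    intro a ha
    simp only [Finset.mem_singleton]
    constructor
    · intro h
      refine ⟨h, fun htl => my_no_selfloop hd tl r (P i) (harb i) ha ?_⟩
      rw [h, htl]
    · exact fun h => h.1
  have hsum : vDeg hd F v = ∑ i : Fin k, vDeg hd (P i) v := by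
    rw [vDeg, ← hU, Finset.filter_biUnion, Finset.card_biUnion]
    · rfl
    · intro i _ j _ hij
      exact (hdisj i j hij).mono (Finset.filter_subset _ _) (Finset.filter_subset _ _)
  rw [hsum]
  by_cases hv : v = r
  · subst hv
    rw [if_pos rfl, Finset.sum_eq_zero]
    intro i _
    rw [heach i]
    exact (harb i).2.2
  · rw [if_neg hv]
    rw [Finset.sum_congr rfl (fun i _ => by rw [heach i, (harb i).2.1 v hv])]
    simp

lemma my_heads_card (hd : A → V) (F : Finset A) (X : Finset V) :
    (F.filter (fun a => hd a ∈ X)).card = ∑ v ∈ X, vDeg hd F v := by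
  have : F.filter (fun a => hd a ∈ X) = X.biUnion (fun v => F.filter (fun a => hd a = v)) := by
    ext a
    simp only [Finset.mem_filter, Finset.mem_biUnion]
    constructor
    · rintro ⟨haF, hhd⟩
      exact ⟨hd a, hhd, haF, rfl⟩
    · rintro ⟨v, hv, haF, rfl⟩
      exact ⟨haF, hv⟩
  rw [this, Finset.card_biUnion]
  · rfl
  · intro i _ j _ hij
    rw [Function.onFun, Finset.disjoint_left]
    rintro a ha hb
    exact hij ((Finset.mem_filter.mp ha).2 ▸ (Finset.mem_filter.mp hb).2 ▸ rfl)

lemma my_split_inout (hd tl : A → V) (F : Finset A) (Y : Finset V) :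
    (F.filter (fun a => hd a ∈ Y)).card =
      (F.filter (fun a => hd a ∈ Y ∧ tl a ∈ Y)).card + inDeg hd tl F Y := by
  rw [inDeg]
  have h1 : (F.filter (fun a => hd a ∈ Y)).filter (fun a => tl a ∈ Y)
      = F.filter (fun a => hd a ∈ Y ∧ tl a ∈ Y) := by
    rw [Finset.filter_filter]
  have h2 : (F.filter (fun a => hd a ∈ Y)).filter (fun a => ¬ tl a ∈ Y)
      = F.filter (fun a => hd a ∈ Y ∧ tl a ∉ Y) := by
    rw [Finset.filter_filter]
  rw [← h1, ← h2]
  exact (Finset.card_filter_add_card_filter_not (fun a => tl a ∈ Y)).symm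

lemma my_split_inter (F G : Finset A) (q : A → Prop) [DecidablePred q] :
    (F.filter q).card = ((F ∩ G).filter q).card + ((F \ G).filter q).card := by
  have hU : F ∩ G ∪ F \ G = F := by
    ext a
    simp only [Finset.mem_union, Finset.mem_inter, Finset.mem_sdiff]
    tauto
  have hdj : Disjoint ((F ∩ G).filter q) ((F \ G).filter q) := by
    rw [Finset.disjoint_left]
    intro a ha hb
    exact (Finset.mem_sdiff.mp (Finset.mem_filter.mp hb).1).2
      (Finset.mem_inter.mp (Finset.mem_filter.mp ha).1).2
  conv_lhs => rw [← hU]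
  rw [Finset.filter_union, Finset.card_union_of_disjoint hdj]

end MyAux

theorem stmt_3 [Fintype V] [DecidableEq V] [DecidableEq A] (hd tl : A → V)
    (k p : ℕ) (r : V)
    (S T : Finset A) (hS : Feasible hd tl k r S) (hT : Feasible hd tl k r T)
    (e f : Fin p → A)
    (he_inj : Function.Injective e) (hf_inj : Function.Injective f)
    (he_range : S \ T = Finset.image e Finset.univ)
    (hf_range : T \ S = Finset.image f Finset.univ)
    (h_heads : ∀ i : Fin p, hd (e i) = hd (f i))
    (X : Fin p → Finset V) (hX : ∀ i : Fin p, MinTightFor hd tl S k r (f i) (X i))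
    :
    ∀ i : Fin p, ∃ j : Fin p, ArcIn hd tl (X i) (e j) := by
  intro i
  rcases hX i with h | h
  · -- X i is a tight set containing f i
    obtain ⟨⟨hrX, hk⟩, hfin, _⟩ := h
    by_contra hcon
    push_neg at hcon
    set Y := X i with hY
    -- (4) no arc of S \ T lies inside Y
    have h4 : ((S \ T).filter (fun a => hd a ∈ Y ∧ tl a ∈ Y)).card = 0 := by
      rw [Finset.card_eq_zero, Finset.filter_eq_empty_iff]
      intro a ha
      rw [he_range] at ha
      obtain ⟨j, _, rfl⟩ := Finset.mem_image.mp ha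
      exact hcon j
    -- (5) f i lies inside Y
    have h5 : 1 ≤ ((T \ S).filter (fun a => hd a ∈ Y ∧ tl a ∈ Y)).card := by
      rw [Nat.succ_le_iff, Finset.card_pos]
      refine ⟨f i, Finset.mem_filter.mpr ⟨?_, hfin.1, hfin.2⟩⟩
      rw [hf_range]
      exact Finset.mem_image.mpr ⟨i, Finset.mem_univ i, rfl⟩
    -- (6) indegree bounds
    have hYne : Y.Nonempty := ⟨hd (f i), hfin.1⟩
    have h6 : k ≤ inDeg hd tl T Y := my_feasible_inDeg_ge hd tl k r T hT Y hYne hrX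
    -- (2) head counts agree
    have h2 : (S.filter (fun a => hd a ∈ Y)).card = (T.filter (fun a => hd a ∈ Y)).card := by
      rw [my_heads_card, my_heads_card]
      apply Finset.sum_congr rfl
      intro v _
      rw [my_feasible_vDeg hd tl k r S hS v, my_feasible_vDeg hd tl k r T hT v]
    -- (1) split head counts
    have h1S := my_split_inout hd tl S Y
    have h1T := my_split_inout hd tl T Y
    -- (3) splits across intersection
    have h3S := my_split_inter S T (fun a => hd a ∈ Y ∧ tl a ∈ Y)
    have h3T := my_split_inter T S (fun a => hd a ∈ Y ∧ tl a ∈ Y)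
    have hST : T ∩ S = S ∩ T := Finset.inter_comm T S
    rw [hST] at h3T
    omega
  · exact ⟨i, by simp [ArcIn, h.2]⟩
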